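/- There exists an absolute constant C > 0 such that the following holds for all sufficiently small r > 0. Let κ ≥ 1 and let f ≥ 0 be a measurable function on the half plane ℝ²₊ = {y = (y₁,y₂) : y₁ > 0}, vanishing outside the half unit disc {|y| ≤ 1, y₁ > 0}, vanishing on {|y| ≤ r}, and satisfying ∫_{B(0,s)} f(y) dy ≤ κ·s for all s ∈ (0,1]. Then for every point x = (x₁, x₂) with x₁ = r/2 and |x₂| < r/6, one has (1/2π)·∫_{ℝ²₊} (ln|x − y′| − ln|x − y|)·f(y) dy ≤ C·r·κ·(1 + |ln r|), where y′ = (−y₁, y₂) denotes the reflection of y across the vertical axis. -/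

import Mathlib

open MeasureTheory Filter Metric Set
open scoped ENNReal Topology

noncomputable section

/-- Points of the plane `ℝ²`, with the Euclidean norm. -/
abbrev Euc2 : Type := EuclideanSpace ℝ (Fin 2)

/-- The point of `ℝ²` with coordinates `(a, b)`. -/
def pt (a b : ℝ) : Euc2 := (EuclideanSpace.equiv (Fin 2) ℝ).symm ![a, b]

/-- The reflection `y′ = (−y₁, y₂)` of `y` across the vertical axis. -/
def reflPt (y : Euc2) : Euc2 := pt (-(y 0)) (y 1)


lemma norm_sq_eq (v : Euc2) : ‖v‖^2 = (v 0)^2 + (v 1)^2 := by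
  rw [EuclideanSpace.norm_eq, Real.sq_sqrt (by positivity)]
  simp [Fin.sum_univ_two, sq_abs]

lemma reflPt_apply0 (y : Euc2) : reflPt y 0 = -(y 0) := rfl
lemma reflPt_apply1 (y : Euc2) : reflPt y 1 = y 1 := rfl

lemma kernel_bound {r : ℝ} (hr : 0 < r) {x y : Euc2} (hx0 : x 0 = r/2)
    (hx1 : |x 1| < r/6) (hy0 : 0 < y 0) (hyr : r ≤ ‖y‖) :
    Real.log ‖x - reflPt y‖ - Real.log ‖x - y‖ ≤ 5 * r / ‖y‖ := by
  have hy : (0:ℝ) < ‖y‖ := lt_of_lt_of_le hr hyr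
  have hy0n : y 0 ≤ ‖y‖ := by
    have h1 : (y 0)^2 ≤ ‖y‖^2 := by rw [norm_sq_eq]; nlinarith [sq_nonneg (y 1)]
    nlinarith [norm_nonneg y, hy0]
  have hxn : ‖x‖ ≤ (8/15)*r := by
    have h1 : ‖x‖^2 = (r/2)^2 + (x 1)^2 := by rw [norm_sq_eq, hx0]
    have h2 : (x 1)^2 ≤ (r/6)^2 := by nlinarith [abs_nonneg (x 1), sq_abs (x 1)]
    nlinarith [norm_nonneg x]
  have ha : (7/15)*‖y‖ ≤ ‖x - y‖ := by
    have := norm_sub_norm_le y x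
    rw [norm_sub_rev y x] at this
    nlinarith
  have ha0 : (0:ℝ) < ‖x - y‖ := lt_of_lt_of_le (by positivity) ha
  have hsub : ∀ w : Euc2, ∀ i : Fin 2, (x - w) i = x i - w i := fun w i => rfl
  have hb2 : ‖x - reflPt y‖^2 = ‖x - y‖^2 + 4 * (x 0) * (y 0) := by
    rw [norm_sq_eq, norm_sq_eq, hsub _ 0, hsub _ 1, hsub _ 0, hsub _ 1,
      reflPt_apply0, reflPt_apply1]
    ring
  have hb0 : (0:ℝ) < ‖x - reflPt y‖ := by
    have : (0:ℝ) < ‖x - reflPt y‖^2 := by rw [hb2]; nlinarith [sq_nonneg ‖x - y‖]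
    nlinarith [norm_nonneg (x - reflPt y)]
  set a := ‖x - y‖ with hadef
  set b := ‖x - reflPt y‖ with hbdef
  have key : Real.log b - Real.log a ≤ 2 * (x 0) * (y 0) / a^2 := by
    have h1 : Real.log b - Real.log a = (1/2) * Real.log (b^2 / a^2) := by
      rw [Real.log_div (by positivity) (by positivity), Real.log_pow, Real.log_pow]
      push_cast; ring
    have h2 : Real.log (b^2 / a^2) ≤ b^2 / a^2 - 1 :=
      Real.log_le_sub_one_of_pos (by positivity)
    have h3 : b^2 / a^2 - 1 = 4 * (x 0) * (y 0) / a^2 := by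
      field_simp; linarith [hb2]
    have h4 : (1/2) * (4 * (x 0) * (y 0) / a^2) = 2 * (x 0) * (y 0) / a^2 := by ring
    rw [h1]; rw [h3] at h2; linarith
  have last : 2 * (x 0) * (y 0) / a^2 ≤ 5 * r / ‖y‖ := by
    rw [div_le_div_iff₀ (by positivity) hy]
    have ha2 : (7/15*‖y‖)^2 ≤ a^2 := by nlinarith
    rw [hx0]
    nlinarith [mul_pos hr hy, hy0.le]
  linarith

/-- There is an absolute constant `C > 0` such that, for all sufficiently small `r > 0`,
for every `κ ≥ 1` and every measurable `f ≥ 0` on the half plane `{y₁ > 0}` vanishing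
outside the half unit disc, vanishing on `{|y| ≤ r}` and satisfying
`∫_{B(0,s)} f ≤ κ·s` for `s ∈ (0,1]`, and for every point `x = (r/2, x₂)` with `|x₂| < r/6`,
the half-plane Green's potential satisfies
`(1/2π)·∫_{ℝ²₊} (ln|x−y′| − ln|x−y|)·f(y) dy ≤ C·r·κ·(1 + |ln r|)`. -/
theorem green_potential_pointwise_bound :
    ∃ C > (0 : ℝ), ∃ rstar > (0 : ℝ), ∀ r ∈ Ioo (0 : ℝ) rstar, ∀ κ : ℝ, 1 ≤ κ →
      ∀ f : Euc2 → ℝ, Measurable f → (∀ y, 0 ≤ f y) →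
        (∀ y : Euc2, ¬(‖y‖ ≤ 1 ∧ 0 < y 0) → f y = 0) →
        (∀ y : Euc2, ‖y‖ ≤ r → f y = 0) →
        (∀ s ∈ Ioc (0 : ℝ) 1,
          ∫⁻ y in ball (0 : Euc2) s, ENNReal.ofReal (f y) ≤ ENNReal.ofReal (κ * s)) →
        ∀ x : Euc2, x 0 = r / 2 → |x 1| < r / 6 →
          (∫⁻ y in {y : Euc2 | 0 < y 0},
              ENNReal.ofReal ((Real.log ‖x - reflPt y‖ - Real.log ‖x - y‖) * f y))
            / ENNReal.ofReal (2 * Real.pi)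
          ≤ ENNReal.ofReal (C * r * κ * (1 + |Real.log r|)) := by
  refine ⟨20, by norm_num, 1/2, by norm_num, ?_⟩
  rintro r ⟨hr0, hr1⟩ κ hκ f hf hf0 hsupp hvan hmass x hx0 hx1
  have hκ0 : (0:ℝ) < κ := lt_of_lt_of_le one_pos hκ
  set g : Euc2 → ℝ≥0∞ :=
    fun y => ENNReal.ofReal ((Real.log ‖x - reflPt y‖ - Real.log ‖x - y‖) * f y) with hg
  -- drop the division by 2π
  have hdiv : (∫⁻ y in {y : Euc2 | 0 < y 0}, g y) / ENNReal.ofReal (2 * Real.pi)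
      ≤ ∫⁻ y, g y := by
    have hpi : (1:ℝ≥0∞) ≤ ENNReal.ofReal (2 * Real.pi) :=
      ENNReal.one_le_ofReal.2 (by nlinarith [Real.pi_gt_three])
    rw [div_eq_mul_inv]
    calc (∫⁻ y in {y : Euc2 | 0 < y 0}, g y) * (ENNReal.ofReal (2 * Real.pi))⁻¹
        ≤ (∫⁻ y in {y : Euc2 | 0 < y 0}, g y) * 1 :=
          by gcongr; exact ENNReal.inv_le_one.2 hpi
      _ = ∫⁻ y in {y : Euc2 | 0 < y 0}, g y := mul_one _
      _ ≤ ∫⁻ y, g y := setLIntegral_le_lintegral _ _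
  refine le_trans hdiv ?_
  -- the dyadic decomposition
  set N : ℕ := ⌈(-Real.log r)/Real.log 2⌉₊ + 1 with hN
  set A : ℕ → Set Euc2 := fun k => {y | r*2^k ≤ ‖y‖ ∧ ‖y‖ < r*2^(k+1)} with hA
  have hAmeas : ∀ k, MeasurableSet (A k) := by
    intro k
    exact (measurableSet_le measurable_const measurable_norm).inter
      (measurableSet_lt measurable_norm measurable_const)
  have hlogr : Real.log r < 0 := Real.log_neg hr0 (by linarith)
  have habs : |Real.log r| = -Real.log r := abs_of_neg hlogr
  -- 2^N > 1/r
  have h2N : 1 < r * 2^N := by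
    have hx : (-Real.log r)/Real.log 2 < (N:ℝ) := by
      calc (-Real.log r)/Real.log 2 ≤ (⌈(-Real.log r)/Real.log 2⌉₊ : ℝ) :=
            Nat.le_ceil _
        _ < (N:ℝ) := by rw [hN]; push_cast; linarith
    have h2 : Real.exp (-Real.log r) < Real.exp ((N:ℝ) * Real.log 2) := by
      apply Real.exp_lt_exp.2
      have hl2 : (0:ℝ) < Real.log 2 := Real.log_pos one_lt_two
      calc -Real.log r = (-Real.log r)/Real.log 2 * Real.log 2 := by field_simp
        _ < (N:ℝ) * Real.log 2 := by exact mul_lt_mul_of_pos_right hx hl2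
    have : (1:ℝ)/r < 2^N := by
      have e1 : Real.exp (-Real.log r) = 1/r := by
        rw [Real.exp_neg, Real.exp_log hr0]; ring
      have e2 : Real.exp ((N:ℝ) * Real.log 2) = 2^N := by
        rw [Real.exp_nat_mul, Real.exp_log two_pos]
      rw [e1, e2] at h2; exact h2
    calc (1:ℝ) = r * (1/r) := by field_simp
      _ < r * 2^N := by exact mul_lt_mul_of_pos_left this hr0
  -- N ≤ 2(1+|log r|)
  have hNle : (N:ℝ) ≤ 2 * (1 + |Real.log r|) := by
    have hc : (⌈(-Real.log r)/Real.log 2⌉₊ : ℝ) < (-Real.log r)/Real.log 2 + 1 :=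
      Nat.ceil_lt_add_one (div_nonneg (by linarith) (Real.log_nonneg one_le_two))
    have hl2 : Real.log 2 ≥ 1/2 := by
      have := Real.log_two_gt_d9; linarith
    have hd : (-Real.log r)/Real.log 2 ≤ 2 * (-Real.log r) := by
      rw [div_le_iff₀ (by linarith)]
      nlinarith
    rw [hN, habs]; push_cast; linarith
  -- mass bound per annulus
  have hmassA : ∀ k : ℕ, ∫⁻ y in A k, ENNReal.ofReal (f y)
      ≤ ENNReal.ofReal (κ * (r * 2^(k+1))) := by
    intro k
    have hs0 : (0:ℝ) < r * 2^(k+1) := by positivity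
    by_cases hcase : r * 2^(k+1) ≤ 1
    · refine le_trans (lintegral_mono_set ?_) (hmass _ ⟨hs0, hcase⟩)
      intro y hy
      rw [mem_ball_zero_iff]
      exact hy.2
    · push_neg at hcase
      have step1 : ∫⁻ y in A k, ENNReal.ofReal (f y)
          ≤ ∫⁻ y in A k, (closedBall (0:Euc2) 1).indicator
              (fun y => ENNReal.ofReal (f y)) y := by
        apply lintegral_mono
        intro y
        by_cases hy1 : y ∈ closedBall (0:Euc2) 1
        · simp [indicator_of_mem hy1]
        · have hyn : 1 < ‖y‖ := by
            rw [mem_closedBall_zero_iff] at hy1; push_neg at hy1; exact hy1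
          have hfy : f y = 0 := hsupp y (by push_neg; intro h; linarith)
          simp [indicator_of_notMem hy1, hfy]
      refine le_trans step1 ?_
      refine le_trans (setLIntegral_le_lintegral _ _) ?_
      rw [lintegral_indicator measurableSet_closedBall]
      rw [← ball_union_sphere]
      refine le_trans (lintegral_union_le _ _ _) ?_
      rw [setLIntegral_measure_zero _ _ (Measure.addHaar_sphere volume 0 1), add_zero]
      refine le_trans (hmass 1 ⟨one_pos, le_refl 1⟩) ?_
      apply ENNReal.ofReal_le_ofReal
      nlinarith
  -- per-annulus bound on g
  have hAk : ∀ k : ℕ, ∫⁻ y in A k, g y ≤ ENNReal.ofReal (10*κ*r) := by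
    intro k
    have hpw : ∀ y ∈ A k, g y ≤ ENNReal.ofReal ((5/2^k) * f y) := by
      intro y hy
      apply ENNReal.ofReal_le_ofReal
      by_cases hfy : f y = 0
      · rw [hfy]; ring_nf; exact le_refl _
      · have hy1 : ‖y‖ ≤ 1 ∧ 0 < y 0 := by
          by_contra h; exact hfy (hsupp y h)
        have h2k : (1:ℝ) ≤ 2^k := by
          calc (1:ℝ) = 2^0 := by norm_num
            _ ≤ 2^k := pow_le_pow_right₀ one_le_two (Nat.zero_le k)
        have hyr : r ≤ ‖y‖ :=
          le_trans (le_mul_of_one_le_right hr0.le h2k) hy.1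
        have hk := kernel_bound hr0 hx0 hx1 hy1.2 hyr
        have hle : 5 * r / ‖y‖ ≤ 5/2^k := by
          rw [div_le_div_iff₀ (lt_of_lt_of_le hr0 hyr) (by positivity)]
          have := hy.1
          nlinarith
        exact mul_le_mul_of_nonneg_right (le_trans hk hle) (hf0 y)
    calc ∫⁻ y in A k, g y ≤ ∫⁻ y in A k, ENNReal.ofReal ((5/2^k) * f y) :=
          setLIntegral_mono' (hAmeas k) hpw
      _ = ENNReal.ofReal (5/2^k) * ∫⁻ y in A k, ENNReal.ofReal (f y) := by
          rw [← lintegral_const_mul' _ _ ENNReal.ofReal_ne_top]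
          apply lintegral_congr
          intro y
          rw [← ENNReal.ofReal_mul (show (0:ℝ) ≤ 5/2^k by positivity)]
      _ ≤ ENNReal.ofReal (5/2^k) * ENNReal.ofReal (κ * (r * 2^(k+1))) := by
          gcongr; exact hmassA k
      _ = ENNReal.ofReal (5/2^k * (κ * (r * 2^(k+1)))) := by
          rw [← ENNReal.ofReal_mul (show (0:ℝ) ≤ 5/2^k by positivity)]
      _ = ENNReal.ofReal (10*κ*r) := by
          congr 1
          field_simp
          ring
  -- annuli beyond N give zero
  have hAbig : ∀ k : ℕ, N ≤ k → ∫⁻ y in A k, g y = 0 := by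
    intro k hk
    have : ∫⁻ y in A k, g y = ∫⁻ y in A k, 0 := by
      apply setLIntegral_congr_fun (hAmeas k)
      intro y hy
      have h1 : 1 < ‖y‖ := by
        have h2 : r * 2^N ≤ r * 2^k := by
          have : (2:ℝ)^N ≤ 2^k := pow_le_pow_right₀ one_le_two hk
          nlinarith
        calc (1:ℝ) < r * 2^N := h2N
          _ ≤ r * 2^k := h2
          _ ≤ ‖y‖ := hy.1
      have hfy : f y = 0 := hsupp y (by push_neg; intro h; linarith)
      simp [hg, hfy]
    rw [this, lintegral_zero]
  -- cover: complement of ⋃ A k has g = 0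
  have hcover : ∀ t : ℝ, r ≤ t → ∃ k : ℕ, r*2^k ≤ t ∧ t < r*2^(k+1) := by
    intro t ht
    have hex : ∃ k : ℕ, t < r*2^(k+1) := by
      obtain ⟨m, hm⟩ := pow_unbounded_of_one_lt (t/r) one_lt_two
      refine ⟨m, ?_⟩
      have : t < r * 2^m := by
        rw [div_lt_iff₀ hr0] at hm; linarith [hm]
      have h2 : r * 2^m ≤ r * 2^(m+1) := by
        have : (2:ℝ)^m ≤ 2^(m+1) := pow_le_pow_right₀ one_le_two (Nat.le_succ m)
        nlinarith
      linarith
    classical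
    refine ⟨Nat.find hex, ?_, Nat.find_spec hex⟩
    rcases Nat.eq_zero_or_pos (Nat.find hex) with h0 | hpos
    · rw [h0]; simpa using ht
    · have := Nat.find_min hex (Nat.sub_lt hpos one_pos)
      push_neg at this
      have heq : Nat.find hex - 1 + 1 = Nat.find hex := Nat.succ_pred_eq_of_pos hpos
      rw [heq] at this
      exact this
  have hcompl : ∫⁻ y in (⋃ k, A k)ᶜ, g y = 0 := by
    have : ∫⁻ y in (⋃ k, A k)ᶜ, g y = ∫⁻ y in (⋃ k, A k)ᶜ, 0 := by
      apply setLIntegral_congr_fun (MeasurableSet.iUnion hAmeas).compl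
      intro y hy
      have hyn : ‖y‖ < r := by
        by_contra h
        push_neg at h
        obtain ⟨k, hk1, hk2⟩ := hcover ‖y‖ h
        exact hy (mem_iUnion.2 ⟨k, hk1, hk2⟩)
      have hfy : f y = 0 := hvan y hyn.le
      simp [hg, hfy]
    rw [this, lintegral_zero]
  -- put it together
  calc ∫⁻ y, g y = (∫⁻ y in ⋃ k, A k, g y) + ∫⁻ y in (⋃ k, A k)ᶜ, g y :=
        (lintegral_add_compl g (MeasurableSet.iUnion hAmeas)).symm
    _ = ∫⁻ y in ⋃ k, A k, g y := by rw [hcompl, add_zero]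
    _ ≤ ∑' k, ∫⁻ y in A k, g y := lintegral_iUnion_le A g
    _ = ∑ k ∈ Finset.range N, ∫⁻ y in A k, g y := by
        apply tsum_eq_sum
        intro k hk
        exact hAbig k (by simpa [Finset.mem_range, not_lt] using hk)
    _ ≤ (Finset.range N).card • ENNReal.ofReal (10*κ*r) :=
        Finset.sum_le_card_nsmul _ _ _ (fun k _ => hAk k)
    _ = (N : ℝ≥0∞) * ENNReal.ofReal (10*κ*r) := by
        rw [Finset.card_range, nsmul_eq_mul]
    _ = ENNReal.ofReal ((N:ℝ) * (10*κ*r)) := by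
        rw [ENNReal.ofReal_mul (show (0:ℝ) ≤ (N:ℝ) by positivity),
          ENNReal.ofReal_natCast]
    _ ≤ ENNReal.ofReal (20 * r * κ * (1 + |Real.log r|)) := by
        apply ENNReal.ofReal_le_ofReal
        have h1 : (0:ℝ) ≤ 10*κ*r := by positivity
        nlinarith [abs_nonneg (Real.log r), hNle]
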